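/- Let T ∈ L(H) be an operator on a separable infinite-dimensional complex Hilbert space H. If the essential spectrum σ_e(T; H) = {λ ∈ ℂ : T − λI is not Fredholm} has empty interior, then T is not a universal operator. -/

import Mathlib

noncomputable section

open Function

namespace UnivAux

open scoped Classical

variable {ι : Type*} (τ : ι ≃ ι × ℕ)

/-- The "successor" map on the index set coming from the identification `ι ≃ ι × ℕ`. -/
def shiftIdx : ι → ι := fun j => τ.symm ((τ j).1, (τ j).2 + 1)

lemma shiftIdx_injective : Function.Injective (shiftIdx τ) := by
  intro a b hab
  have h := τ.symm.injective hab
  obtain ⟨h1, h2⟩ := Prod.ext_iff.mp h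
  exact τ.injective (Prod.ext h1 (Nat.succ_injective h2))

lemma memℓp_shift (f : lp (fun _ : ι => ℂ) 2) :
    Memℓp (fun j => f (shiftIdx τ j)) 2 := by
  apply memℓp_gen
  have hs : Summable fun j => ‖f j‖ ^ (2 : ENNReal).toReal :=
    (lp.memℓp f).summable (by norm_num)
  simpa [Function.comp_def] using hs.comp_injective (shiftIdx_injective τ)

/-- The backward-shift-type operator on `ℓ²(ι)`, as a linear map. -/
def shiftL : lp (fun _ : ι => ℂ) 2 →ₗ[ℂ] lp (fun _ : ι => ℂ) 2 where
  toFun f := ⟨fun j => f (shiftIdx τ j), memℓp_shift τ f⟩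
  map_add' f g := by
    apply lp.ext
    funext j
    simp [lp.coeFn_add, Pi.add_apply]
    rfl
  map_smul' c f := by
    apply lp.ext
    funext j
    simp [lp.coeFn_smul, Pi.smul_apply]

lemma shiftL_apply (f : lp (fun _ : ι => ℂ) 2) (j : ι) :
    (shiftL τ f : ∀ _ : ι, ℂ) j = f (shiftIdx τ j) := rfl

lemma shiftL_norm (f : lp (fun _ : ι => ℂ) 2) : ‖shiftL τ f‖ ≤ 1 * ‖f‖ := by
  rw [one_mul]
  apply lp.norm_le_of_tsum_le (p := 2) (by norm_num) (norm_nonneg f)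
  rw [lp.norm_rpow_eq_tsum (by norm_num) f]
  calc ∑' j, ‖(shiftL τ f : ∀ _ : ι, ℂ) j‖ ^ (2 : ENNReal).toReal
      = ∑' j, ((fun j => ‖f j‖ ^ (2 : ENNReal).toReal) ∘ (shiftIdx τ)) j := rfl
    _ ≤ ∑' j, ‖f j‖ ^ (2 : ENNReal).toReal :=
        tsum_comp_le_tsum_of_inj ((lp.memℓp f).summable (by norm_num))
          (fun a => Real.rpow_nonneg (norm_nonneg _) _) (shiftIdx_injective τ)

/-- The backward-shift-type operator on `ℓ²(ι)`, as a continuous linear map. -/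
def shiftCLM : lp (fun _ : ι => ℂ) 2 →L[ℂ] lp (fun _ : ι => ℂ) 2 :=
  LinearMap.mkContinuous (shiftL τ) 1 (shiftL_norm τ)

lemma shiftCLM_apply (f : lp (fun _ : ι => ℂ) 2) (j : ι) :
    (shiftCLM τ f : ∀ _ : ι, ℂ) j = f (shiftIdx τ j) := rfl

/-- Eigenvectors of the shift: a geometric sequence in each "row". -/
def eigvec (lam : ℂ) (hlam : ‖lam‖ < 1) (i : ι) : lp (fun _ : ι => ℂ) 2 := by
  refine ⟨fun j => if (τ j).1 = i then lam ^ (τ j).2 else 0, ?_⟩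
  apply memℓp_gen
  set g : ι → ℝ :=
    fun j => ‖(if (τ j).1 = i then lam ^ (τ j).2 else 0 : ℂ)‖ ^ (2 : ENNReal).toReal with hg
  have hinj : Function.Injective (fun n : ℕ => τ.symm (i, n)) := by
    intro a b hab
    have := τ.symm.injective hab
    exact congrArg Prod.snd this
  have hvanish : ∀ x ∉ Set.range (fun n : ℕ => τ.symm (i, n)), g x = 0 := by
    intro x hx
    have hne : (τ x).1 ≠ i := by
      intro hEq
      exact hx ⟨(τ x).2, by rw [← hEq]; simp⟩
    simp [hg, hne, Real.zero_rpow (by norm_num : (2 : ENNReal).toReal ≠ 0)]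
  have hcomp : Summable (g ∘ fun n : ℕ => τ.symm (i, n)) := by
    have hEq : (g ∘ fun n : ℕ => τ.symm (i, n)) = fun n : ℕ => (‖lam‖ ^ 2) ^ n := by
      funext n
      have hpt : g (τ.symm (i, n)) = ‖lam ^ n‖ ^ (2 : ENNReal).toReal := by
        simp [hg]
      show g (τ.symm (i, n)) = (‖lam‖ ^ 2) ^ n
      rw [hpt, norm_pow, show (2 : ENNReal).toReal = ((2 : ℕ) : ℝ) by norm_num,
        Real.rpow_natCast, ← pow_mul, ← pow_mul, mul_comm]
    rw [hEq]
    exact summable_geometric_of_lt_one (by positivity)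
      (by nlinarith [norm_nonneg lam])
  exact (hinj.summable_iff hvanish).mp hcomp

lemma eigvec_apply (lam : ℂ) (hlam : ‖lam‖ < 1) (i j : ι) :
    (eigvec τ lam hlam i : ∀ _ : ι, ℂ) j
      = if (τ j).1 = i then lam ^ (τ j).2 else 0 := rfl

lemma shiftCLM_eigvec (lam : ℂ) (hlam : ‖lam‖ < 1) (i : ι) :
    shiftCLM τ (eigvec τ lam hlam i) = lam • eigvec τ lam hlam i := by
  classical
  apply lp.ext
  funext j
  rw [lp.coeFn_smul, Pi.smul_apply, smul_eq_mul, shiftCLM_apply, eigvec_apply, eigvec_apply]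
  simp only [shiftIdx, Equiv.apply_symm_apply]
  by_cases hcase : (τ j).1 = i <;> simp [hcase, pow_succ, mul_comm]

lemma eigvec_linearIndependent (lam : ℂ) (hlam : ‖lam‖ < 1) :
    LinearIndependent ℂ (eigvec τ lam hlam) := by
  classical
  rw [linearIndependent_iff']
  intro s g hsum i hi
  have key : ((∑ i' ∈ s, g i' • eigvec τ lam hlam i' : lp (fun _ : ι => ℂ) 2) : ∀ _ : ι, ℂ)
      (τ.symm (i, 0)) = g i := by
    rw [lp.coeFn_sum, Finset.sum_apply]
    have hterm : ∀ i' ∈ s,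
        ((g i' • eigvec τ lam hlam i' : lp (fun _ : ι => ℂ) 2) : ∀ _ : ι, ℂ) (τ.symm (i, 0))
          = if i' = i then g i' else 0 := by
      intro i' _
      rw [lp.coeFn_smul, Pi.smul_apply, smul_eq_mul, eigvec_apply, Equiv.apply_symm_apply]
      by_cases hcase : i' = i
      · simp [hcase]
      · have : i ≠ i' := fun hEq => hcase hEq.symm
        simp [this, hcase]
    rw [Finset.sum_congr rfl hterm, Finset.sum_ite_eq' s i g, if_pos hi]
  rw [hsum] at key
  simpa using key.symm

end UnivAux

open UnivAux

/-- Universal operator on a complex Hilbert space. -/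
def IsUniversal {H : Type*} [NormedAddCommGroup H] [InnerProductSpace ℂ H]
    (U : H →L[ℂ] H) : Prop :=
  ∀ T : H →L[ℂ] H, ∃ M : Submodule ℂ H, IsClosed (M : Set H) ∧ (∀ x ∈ M, U x ∈ M) ∧
    ∃ c : ℂ, c ≠ 0 ∧ ∃ J : H ≃L[ℂ] M, ∀ x : H, U (J x : H) = c • ((J (T x) : H))

/-- A bounded operator is Fredholm if its kernel is finite-dimensional and its range is
closed of finite codimension. -/
def IsFredholmOp {H : Type*} [NormedAddCommGroup H] [InnerProductSpace ℂ H]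
    (S : H →L[ℂ] H) : Prop :=
  FiniteDimensional ℂ (LinearMap.ker (S : H →ₗ[ℂ] H)) ∧ IsClosed (LinearMap.range (S : H →ₗ[ℂ] H) : Set H) ∧
    FiniteDimensional ℂ (H ⧸ LinearMap.range (S : H →ₗ[ℂ] H))

/-- The essential spectrum of an operator. -/
def essentialSpectrum {H : Type*} [NormedAddCommGroup H] [InnerProductSpace ℂ H]
    (T : H →L[ℂ] H) : Set ℂ :=
  {z : ℂ | ¬ IsFredholmOp (T - z • (1 : H →L[ℂ] H))}

/-- If the essential spectrum of `T` has empty interior, then `T` is not universal. -/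
theorem not_universal_of_interior_essentialSpectrum_empty {H : Type*} [NormedAddCommGroup H]
    [InnerProductSpace ℂ H] [CompleteSpace H] [TopologicalSpace.SeparableSpace H]
    (hinf : ¬ FiniteDimensional ℂ H)
    (T : H →L[ℂ] H) (h : interior (essentialSpectrum T) = ∅) :
    ¬ IsUniversal T := by
  intro hU
  obtain ⟨w, b, hbw⟩ := exists_hilbertBasis ℂ H
  haveI hInf : Infinite w := by
    rw [Set.infinite_coe_iff]
    intro hfin
    apply hinf
    have h1 : FiniteDimensional ℂ (Submodule.span ℂ w) :=
      FiniteDimensional.span_of_finite ℂ hfin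
    have h2 : IsClosed ((Submodule.span ℂ w : Submodule ℂ H) : Set H) :=
      Submodule.closed_of_finiteDimensional _
    have h3 : (Submodule.span ℂ w).topologicalClosure = ⊤ := by
      have := b.dense_span
      rwa [hbw, Subtype.range_coe] at this
    have h4 : Submodule.span ℂ w = (⊤ : Submodule ℂ H) := by
      rw [← h3, h2.submodule_topologicalClosure_eq]
    rw [h4] at h1
    exact Submodule.topEquiv.finiteDimensional
  have hcard : Nonempty (↥w ≃ ↥w × ℕ) := by
    apply Cardinal.eq.mp
    have : Cardinal.mk (↥w × ℕ) = Cardinal.mk ↥w := by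
      simp [Cardinal.mk_prod, Cardinal.lift_uzero, Cardinal.mk_nat, Cardinal.lift_aleph0,
        Cardinal.mk_mul_aleph0_eq]
    exact this.symm
  obtain ⟨τ⟩ := hcard
  set e : H ≃ₗᵢ[ℂ] lp (fun _ : ↥w => ℂ) 2 := b.repr with he
  set BH : H →L[ℂ] H :=
    ((e.symm.toContinuousLinearEquiv : lp (fun _ : ↥w => ℂ) 2 ≃L[ℂ] H) :
        lp (fun _ : ↥w => ℂ) 2 →L[ℂ] H).comp
      ((shiftCLM τ).comp
        ((e.toContinuousLinearEquiv : H ≃L[ℂ] lp (fun _ : ↥w => ℂ) 2) :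
          H →L[ℂ] lp (fun _ : ↥w => ℂ) 2)) with hBHdef
  obtain ⟨M, _hMc, _hMi, c, hc, J, hJ⟩ := hU BH
  have hball : Metric.ball (0 : ℂ) ‖c‖ ⊆ essentialSpectrum T := by
    intro z hz
    set lam : ℂ := z / c with hlamdef
    have hlam : ‖lam‖ < 1 := by
      rw [hlamdef, norm_div, div_lt_one (norm_pos_iff.mpr hc)]
      simpa using hz
    intro hFred
    obtain ⟨hker, -, -⟩ := hFred
    set S : H →L[ℂ] H := T - z • (1 : H →L[ℂ] H) with hSdef
    set u : ↥w → H := fun i => (J (e.symm (eigvec τ lam hlam i)) : H) with hudef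
    have hu : ∀ i, u i ∈ LinearMap.ker (S : H →ₗ[ℂ] H) := by
      intro i
      rw [LinearMap.mem_ker]
      have hBH : BH (e.symm (eigvec τ lam hlam i))
          = lam • e.symm (eigvec τ lam hlam i) := by
        show e.symm (shiftCLM τ (e (e.symm _))) = _
        rw [LinearIsometryEquiv.apply_symm_apply, shiftCLM_eigvec, map_smul]
      have hT : T (u i) = z • u i := by
        have hx := hJ (e.symm (eigvec τ lam hlam i))
        rw [hBH, map_smul] at hx
        have hcl : c * lam = z := by
          rw [hlamdef]; field_simp
        calc T (u i) = c • ((lam • J (e.symm (eigvec τ lam hlam i)) : M) : H) := hx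
          _ = c • (lam • u i) := by rw [Submodule.coe_smul]
          _ = (c * lam) • u i := by rw [smul_smul]
          _ = z • u i := by rw [hcl]
      show S (u i) = 0
      rw [hSdef]
      simp [ContinuousLinearMap.sub_apply, ContinuousLinearMap.smul_apply,
        ContinuousLinearMap.one_apply, hT]
    set φ : lp (fun _ : ↥w => ℂ) 2 →ₗ[ℂ] H :=
      M.subtype ∘ₗ (J : H ≃L[ℂ] M).toLinearEquiv.toLinearMap ∘ₗ e.symm.toLinearEquiv.toLinearMap
      with hφdef
    have hφinj : Function.Injective φ := by
      apply Function.Injective.comp (Submodule.injective_subtype M)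
      apply Function.Injective.comp (J.injective)
      exact e.symm.injective
    have hu_ind : LinearIndependent ℂ u := by
      have hEq : u = φ ∘ eigvec τ lam hlam := rfl
      rw [hEq]
      exact (eigvec_linearIndependent τ lam hlam).map' φ (LinearMap.ker_eq_bot.mpr hφinj)
    have hk : LinearIndependent ℂ (fun i : ↥w => (⟨u i, hu i⟩ : LinearMap.ker (S : H →ₗ[ℂ] H))) := by
      apply LinearIndependent.of_comp (LinearMap.ker (S : H →ₗ[ℂ] H)).subtype
      exact hu_ind
    haveI := hker
    exact Module.Finite.not_linearIndependent_of_infinite _ hk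
  have h0 : (0 : ℂ) ∈ interior (essentialSpectrum T) :=
    interior_maximal hball Metric.isOpen_ball (Metric.mem_ball_self (norm_pos_iff.mpr hc))
  rw [h] at h0
  exact h0

end
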